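/- Let λ : ℤ₊ → ℝ satisfy (UB). For every k ≥ 1 and all y, x ∈ ℤ₊: φ^{(k)}(y,x) = −(1/λ(y)) · (1/(2πi)) ∮_{C_λ} ψ_y(w) p_x(w) w^{−k} dw. -/

import Mathlib

open Complex MeasureTheory Finset
open scoped Real ComplexOrder

/-- ψ_x(w) = ∏_{k=0}^{x} λ(k)/(λ(k)−w). -/
noncomputable def psiF (lam : ℕ → ℝ) (x : ℕ) (w : ℂ) : ℂ :=
  ∏ k ∈ Finset.range (x + 1), (lam k : ℂ) / ((lam k : ℂ) - w)

/-- p_x(w) = ∏_{k=0}^{x−1} (λ(k)−w)/λ(k). -/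
noncomputable def pF (lam : ℕ → ℝ) (x : ℕ) (w : ℂ) : ℂ :=
  ∏ k ∈ Finset.range x, (((lam k : ℂ) - w) / (lam k : ℂ))

/-- e^{tL}(x,y) := −(1/λ(y))·(1/(2πi)) ∮_{|w|=R} ψ_y(w) p_x(w) e^{−tw} dw,
the contour being the counterclockwise circle of radius R centred at 0. -/
noncomputable def eL (lam : ℕ → ℝ) (R t : ℝ) (x y : ℕ) : ℂ :=
  -(1 / (lam y : ℂ)) * ((2 * (Real.pi : ℂ) * Complex.I)⁻¹ *
    ∮ w in C(0, R), psiF lam y w * pF lam x w * Complex.exp (-(t : ℂ) * w))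

/-- φ(y,x) = −λ(y)⁻¹ 1(x > y). -/
noncomputable def phiF (lam : ℕ → ℝ) (y x : ℕ) : ℝ :=
  if y < x then -(lam y)⁻¹ else 0

/-- Convolution powers: `phik lam k` is φ^{(k+1)}, i.e. `phik lam 0 = φ^{(1)} = φ` and
φ^{(k+1)}(y,x) = Σ_z φ(y,z) φ^{(k)}(z,x) (the sum over z ∈ ℤ₊ reduces to z < x since
φ^{(k)}(z,x) vanishes unless z < x). -/
noncomputable def phik (lam : ℕ → ℝ) : ℕ → ℕ → ℕ → ℝ
  | 0, y, x => phiF lam y x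
  | (k + 1), y, x => ∑ z ∈ Finset.range x, phiF lam y z * phik lam k z x

set_option maxHeartbeats 1000000

lemma CircleIntegrable.const_mul' {f : ℂ → ℂ} {c : ℂ} {r : ℝ}
    (h : CircleIntegrable f c r) (a : ℂ) : CircleIntegrable (fun w => a * f w) c r := by
  unfold CircleIntegrable at h ⊢
  exact h.const_mul a

section Aux

variable {lam : ℕ → ℝ} {M R : ℝ}

lemma facts (hpos : ∀ j, 0 < lam j) (hub : ∀ j, lam j ≤ M) (hR : M < R)
    {z : ℂ} (hz : R ≤ ‖z‖) : z ≠ 0 ∧ ∀ j, (lam j : ℂ) - z ≠ 0 := by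
  have hM0 : 0 < M := (hpos 0).trans_le (hub 0)
  have hR0 : 0 < R := hM0.trans hR
  constructor
  · intro h; rw [h] at hz; simp at hz; linarith
  · intro j h
    have hzj : z = (lam j : ℂ) := by linear_combination -h
    rw [hzj, Complex.norm_real, Real.norm_eq_abs, abs_of_pos (hpos j)] at hz
    have := hub j; linarith

lemma sphere_facts (hpos : ∀ j, 0 < lam j) (hub : ∀ j, lam j ≤ M) (hR : M < R)
    {z : ℂ} (hz : z ∈ Metric.sphere (0:ℂ) R) : z ≠ 0 ∧ ∀ j, (lam j : ℂ) - z ≠ 0 := by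
  refine facts hpos hub hR ?_
  rw [mem_sphere_zero_iff_norm.mp hz]

lemma diffAt_psi_prod (s : Finset ℕ) {z : ℂ} (h : ∀ j, (lam j : ℂ) - z ≠ 0) :
    DifferentiableAt ℂ (fun w => ∏ j ∈ s, ((lam j : ℂ) / ((lam j : ℂ) - w))) z := by
  classical
  induction s using Finset.induction_on with
  | empty => simp
  | @insert a s hx ih =>
      simp only [Finset.prod_insert hx]
      exact ((differentiableAt_const _).div
        ((differentiableAt_const _).sub differentiableAt_id) (h _)).mul ih

lemma diff_poly_prod (s : Finset ℕ) :
    Differentiable ℂ (fun w => ∏ j ∈ s, (((lam j : ℂ) - w) / (lam j : ℂ))) := by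
  classical
  induction s using Finset.induction_on with
  | empty => simp
  | @insert a s hx ih =>
      simp only [Finset.prod_insert hx]
      exact (((differentiable_const _).sub differentiable_id).div_const _).mul ih

lemma diffAt_integrand {y x : ℕ} {e : ℤ} {z : ℂ} (hz0 : z ≠ 0)
    (h : ∀ j, (lam j : ℂ) - z ≠ 0) :
    DifferentiableAt ℂ (fun w => psiF lam y w * pF lam x w * w ^ e) z := by
  refine DifferentiableAt.mul (DifferentiableAt.mul ?_ ?_) ?_
  · exact diffAt_psi_prod (Finset.range (y+1)) h
  · exact (diff_poly_prod (Finset.range x)).differentiableAt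
  · exact differentiableAt_zpow.mpr (Or.inl hz0)

lemma integrable_integrand (hpos : ∀ j, 0 < lam j) (hub : ∀ j, lam j ≤ M) (hR : M < R)
    (y x : ℕ) (e : ℤ) :
    CircleIntegrable (fun w => psiF lam y w * pF lam x w * w ^ e) 0 R := by
  have hR0 : 0 < R := ((hpos 0).trans_le (hub 0)).trans hR
  refine ContinuousOn.circleIntegrable hR0.le (fun z hz => ?_)
  obtain ⟨hz0, hsub⟩ := sphere_facts hpos hub hR hz
  exact (diffAt_integrand hz0 hsub).continuousAt.continuousWithinAt

lemma integrable_zpow (hpos : ∀ j, 0 < lam j) (hub : ∀ j, lam j ≤ M) (hR : M < R)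
    (e : ℤ) : CircleIntegrable (fun w : ℂ => w ^ e) 0 R := by
  have hR0 : 0 < R := ((hpos 0).trans_le (hub 0)).trans hR
  refine ContinuousOn.circleIntegrable hR0.le (fun z hz => ?_)
  obtain ⟨hz0, _⟩ := sphere_facts hpos hub hR hz
  exact ((differentiableAt_zpow.mpr (Or.inl hz0)).continuousAt).continuousWithinAt

lemma reduce_lt (hpos : ∀ j, 0 < lam j) {w : ℂ} (hsub : ∀ j, (lam j : ℂ) - w ≠ 0)
    {y x : ℕ} (hyx : y < x) :
    psiF lam y w * pF lam x w = ∏ j ∈ Finset.Ico (y+1) x, (((lam j : ℂ) - w) / (lam j : ℂ)) := by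
  have hne : ∀ j, (lam j : ℂ) ≠ 0 := fun j => Complex.ofReal_ne_zero.mpr (hpos j).ne'
  unfold psiF pF
  rw [← Finset.prod_range_mul_prod_Ico _ (show y+1 ≤ x from hyx), ← mul_assoc]
  have h1 : (∏ k ∈ Finset.range (y + 1), (lam k : ℂ) / ((lam k : ℂ) - w)) *
      (∏ k ∈ Finset.range (y + 1), (((lam k : ℂ) - w) / (lam k : ℂ))) = 1 := by
    rw [← Finset.prod_mul_distrib]
    refine Finset.prod_eq_one fun j _ => ?_
    rw [div_mul_div_comm, mul_comm ((lam j : ℂ)) (((lam j : ℂ) - w)),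
      div_self (mul_ne_zero (hsub j) (hne j))]
  rw [h1, one_mul]

lemma reduce_ge (hpos : ∀ j, 0 < lam j) {w : ℂ} (hsub : ∀ j, (lam j : ℂ) - w ≠ 0)
    {y x : ℕ} (hxy : x ≤ y) :
    psiF lam y w * pF lam x w = ∏ j ∈ Finset.Ico x (y+1), ((lam j : ℂ) / ((lam j : ℂ) - w)) := by
  have hne : ∀ j, (lam j : ℂ) ≠ 0 := fun j => Complex.ofReal_ne_zero.mpr (hpos j).ne'
  unfold psiF pF
  rw [← Finset.prod_range_mul_prod_Ico (fun k => (lam k : ℂ) / ((lam k : ℂ) - w))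
    (show x ≤ y + 1 by omega)]
  have h1 : (∏ k ∈ Finset.range x, (lam k : ℂ) / ((lam k : ℂ) - w)) *
      (∏ k ∈ Finset.range x, (((lam k : ℂ) - w) / (lam k : ℂ))) = 1 := by
    rw [← Finset.prod_mul_distrib]
    refine Finset.prod_eq_one fun j _ => ?_
    rw [div_mul_div_comm, mul_comm ((lam j : ℂ)) (((lam j : ℂ) - w)),
      div_self (mul_ne_zero (hsub j) (hne j))]
  calc (∏ k ∈ Finset.range x, (lam k : ℂ) / ((lam k : ℂ) - w)) *
        (∏ j ∈ Finset.Ico x (y+1), ((lam j : ℂ) / ((lam j : ℂ) - w))) *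
        ∏ k ∈ Finset.range x, (((lam k : ℂ) - w) / (lam k : ℂ))
      = ((∏ k ∈ Finset.range x, (lam k : ℂ) / ((lam k : ℂ) - w)) *
          (∏ k ∈ Finset.range x, (((lam k : ℂ) - w) / (lam k : ℂ)))) *
        ∏ j ∈ Finset.Ico x (y+1), ((lam j : ℂ) / ((lam j : ℂ) - w)) := by ring
    _ = ∏ j ∈ Finset.Ico x (y+1), ((lam j : ℂ) / ((lam j : ℂ) - w)) := by rw [h1, one_mul]

lemma tele (hpos : ∀ j, 0 < lam j) {w : ℂ} (hw0 : w ≠ 0)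
    (hsub : ∀ j, (lam j : ℂ) - w ≠ 0) (y : ℕ) :
    ∀ m, y ≤ m → ∑ z ∈ Finset.Ico (y+1) (m+1), (lam z : ℂ)⁻¹ * psiF lam z w
      = (psiF lam m w - psiF lam y w) * w⁻¹ := by
  have hne : ∀ j, (lam j : ℂ) ≠ 0 := fun j => Complex.ofReal_ne_zero.mpr (hpos j).ne'
  intro m hm
  induction m, hm using Nat.le_induction with
  | base => simp
  | succ m hm ih =>
      have hsucc : psiF lam (m+1) w
          = psiF lam m w * ((lam (m+1) : ℂ) / ((lam (m+1) : ℂ) - w)) := by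
        unfold psiF; rw [Finset.prod_range_succ]
      have hid : (lam (m+1) : ℂ)⁻¹ * psiF lam (m+1) w
          = (psiF lam (m+1) w - psiF lam m w) * w⁻¹ := by
        rw [hsucc, div_eq_mul_inv]
        linear_combination
          (psiF lam m w * ((lam (m+1) : ℂ) - w)⁻¹) * mul_inv_cancel₀ (hne (m+1))
          - (psiF lam m w * w⁻¹) * mul_inv_cancel₀ (hsub (m+1))
          - (psiF lam m w * ((lam (m+1) : ℂ) - w)⁻¹) * mul_inv_cancel₀ hw0
      rw [Finset.sum_Ico_succ_top (by omega), ih, hid]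
      ring

lemma circleIntegral_finset_sum {ι : Type*} (s : Finset ι) (f : ι → ℂ → ℂ) {c : ℂ} {r : ℝ}
    (h : ∀ i ∈ s, CircleIntegrable (f i) c r) :
    (∮ z in C(c, r), ∑ i ∈ s, f i z) = ∑ i ∈ s, ∮ z in C(c, r), f i z := by
  simp only [circleIntegral, Finset.smul_sum]
  exact intervalIntegral.integral_finset_sum (fun i hi => (h i hi).out)

lemma vanish (hpos : ∀ j, 0 < lam j) (hub : ∀ j, lam j ≤ M) (hR : M < R)
    {y x : ℕ} (hxy : x ≤ y) {e : ℤ} (he : e ≤ -1) :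
    (∮ w in C(0, R), psiF lam y w * pF lam x w * w ^ e) = 0 := by
  have hM0 : 0 < M := (hpos 0).trans_le (hub 0)
  have hR0 : 0 < R := hM0.trans hR
  set f : ℂ → ℂ := fun w => psiF lam y w * pF lam x w * w ^ e with hf
  have heq : ∀ r : ℝ, R ≤ r → (∮ w in C(0, r), f w) = ∮ w in C(0, R), f w := by
    intro r hr
    refine Complex.circleIntegral_eq_of_differentiable_on_annulus_off_countable hR0 hr
      Set.countable_empty ?_ ?_
    · intro z hz
      have hz' : R ≤ ‖z‖ := by
        have := hz.2
        simp only [Metric.mem_ball, Complex.dist_eq, sub_zero, not_lt] at this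
        exact this
      obtain ⟨hz0, hsub⟩ := facts hpos hub hR hz'
      exact (diffAt_integrand hz0 hsub).continuousAt.continuousWithinAt
    · intro z hz
      have hz' : R ≤ ‖z‖ := by
        have := hz.1.2
        simp only [Metric.mem_closedBall, Complex.dist_eq, sub_zero, not_le] at this
        exact this.le
      obtain ⟨hz0, hsub⟩ := facts hpos hub hR hz'
      exact diffAt_integrand hz0 hsub
  have hbound : ∀ r : ℝ, R ≤ r → 1 ≤ r → 2*M ≤ r →
      ‖∮ w in C(0, R), f w‖ ≤ 2 * Real.pi * M / (r - M) := by
    intro r hrR hr1 hrM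
    have hr0 : 0 < r := by linarith
    have hrM0 : 0 < r - M := by linarith
    rw [← heq r hrR]
    have hb : ∀ z ∈ Metric.sphere (0:ℂ) r, ‖f z‖ ≤ (M / (r - M)) * r⁻¹ := by
      intro z hz
      have habs : ‖z‖ = r := by
        exact mem_sphere_zero_iff_norm.mp hz
      have hzR : R ≤ ‖z‖ := by rw [habs]; exact hrR
      obtain ⟨hz0, hsub⟩ := facts hpos hub hR hzR
      have hf1 : f z = (∏ j ∈ Finset.Ico x (y+1), ((lam j : ℂ) / ((lam j : ℂ) - z))) * z ^ e := by
        rw [hf]; simp only; rw [reduce_ge hpos hsub hxy]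
      rw [hf1, norm_mul]
      have h1 : ‖∏ j ∈ Finset.Ico x (y+1), ((lam j : ℂ) / ((lam j : ℂ) - z))‖ ≤ M / (r - M) := by
        rw [norm_prod]
        have hfac : ∀ j ∈ Finset.Ico x (y+1),
            ‖(lam j : ℂ) / ((lam j : ℂ) - z)‖ ≤ M / (r - M) := by
          intro j _
          rw [norm_div]
          have hnum : ‖((lam j : ℝ) : ℂ)‖ = lam j := by
            rw [Complex.norm_real, Real.norm_eq_abs, abs_of_pos (hpos j)]
          have hden : r - M ≤ ‖(lam j : ℂ) - z‖ := by
            have h2 : ‖z‖ - ‖((lam j : ℝ) : ℂ)‖ ≤ ‖z - (lam j : ℂ)‖ := norm_sub_norm_le _ _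
            rw [norm_sub_rev] at h2
            have h3 : ‖z‖ = r := by rw [← habs]
            rw [h3, hnum] at h2
            have := hub j; linarith
          rw [hnum]
          exact div_le_div₀ hM0.le (hub j) hrM0 hden
        calc ∏ j ∈ Finset.Ico x (y+1), ‖(lam j : ℂ) / ((lam j : ℂ) - z)‖
            ≤ ∏ _j ∈ Finset.Ico x (y+1), (M / (r - M)) :=
              Finset.prod_le_prod (fun j _ => norm_nonneg _) hfac
          _ = (M / (r - M)) ^ (Finset.Ico x (y+1)).card := by rw [Finset.prod_const]
          _ ≤ M / (r - M) := by
              refine pow_le_of_le_one (div_nonneg hM0.le hrM0.le) ?_ ?_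
              · rw [div_le_one hrM0]; linarith
              · rw [Nat.card_Ico]; omega
      have h2 : ‖z ^ e‖ ≤ r⁻¹ := by
        rw [norm_zpow]
        have h3 : ‖z‖ = r := by rw [← habs]
        rw [h3]
        calc r ^ e ≤ r ^ (-1 : ℤ) := zpow_le_zpow_right₀ hr1 he
          _ = r⁻¹ := zpow_neg_one r
      exact mul_le_mul h1 h2 (norm_nonneg _) (div_nonneg hM0.le hrM0.le)
    calc ‖∮ w in C(0, r), f w‖ ≤ 2 * Real.pi * r * ((M / (r - M)) * r⁻¹) :=
          circleIntegral.norm_integral_le_of_norm_le_const hr0.le hb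
      _ = 2 * Real.pi * M / (r - M) := by
          field_simp
  have htend : Filter.Tendsto (fun r : ℝ => 2 * Real.pi * M / (r - M))
      Filter.atTop (nhds 0) := by
    refine Filter.Tendsto.div_atTop tendsto_const_nhds ?_
    simpa [sub_eq_add_neg] using
      Filter.tendsto_atTop_add_const_right Filter.atTop (-M) Filter.tendsto_id
  have hev : ∀ᶠ r in Filter.atTop, ‖∮ w in C(0, R), f w‖ ≤ 2 * Real.pi * M / (r - M) := by
    filter_upwards [Filter.eventually_ge_atTop (max (max R 1) (2*M))] with r hr
    have hrR : R ≤ r := le_trans (le_trans (le_max_left R 1) (le_max_left _ _)) hr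
    have hr1 : 1 ≤ r := le_trans (le_trans (le_max_right R 1) (le_max_left _ _)) hr
    have hrM : 2*M ≤ r := le_trans (le_max_right _ _) hr
    exact hbound r hrR hr1 hrM
  have : ‖∮ w in C(0, R), f w‖ ≤ 0 := ge_of_tendsto htend hev
  exact norm_le_zero_iff.mp this

lemma base_int (hpos : ∀ j, 0 < lam j) (hub : ∀ j, lam j ≤ M) (hR : M < R)
    {y x : ℕ} (hyx : y < x) :
    (∮ w in C(0, R), psiF lam y w * pF lam x w * w ^ (-1 : ℤ))
      = 2 * (Real.pi : ℂ) * Complex.I := by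
  have hne : ∀ j, (lam j : ℂ) ≠ 0 := fun j => Complex.ofReal_ne_zero.mpr (hpos j).ne'
  have hR0 : 0 < R := ((hpos 0).trans_le (hub 0)).trans hR
  set P : ℂ → ℂ := fun z => ∏ j ∈ Finset.Ico (y+1) x, (((lam j : ℂ) - z) / (lam j : ℂ)) with hP
  have h1 : (∮ w in C(0, R), psiF lam y w * pF lam x w * w ^ (-1 : ℤ))
      = ∮ z in C(0, R), (z - 0)⁻¹ • P z := by
    refine circleIntegral.integral_congr hR0.le fun z hz => ?_
    obtain ⟨hz0, hsub⟩ := sphere_facts hpos hub hR hz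
    show psiF lam y z * pF lam x z * z ^ (-1 : ℤ) = (z - 0)⁻¹ • P z
    rw [reduce_lt hpos hsub hyx, zpow_neg_one, sub_zero, smul_eq_mul, mul_comm]
  rw [h1, DiffContOnCl.circleIntegral_sub_inv_smul
    (Differentiable.diffContOnCl (diff_poly_prod _)) (Metric.mem_ball_self hR0)]
  have hP0 : (∏ j ∈ Finset.Ico (y+1) x, (((lam j : ℂ) - 0) / (lam j : ℂ))) = 1 :=
    Finset.prod_eq_one fun j _ => by rw [sub_zero, div_self (hne j)]
  rw [hP0, smul_eq_mul, mul_one]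

lemma main_int (hpos : ∀ j, 0 < lam j) (hub : ∀ j, lam j ≤ M) (hR : M < R) :
    ∀ (n : ℕ) (x y : ℕ), ((phik lam n y x : ℝ) : ℂ) =
      -(1 / (lam y : ℂ)) * ((2 * (Real.pi : ℂ) * Complex.I)⁻¹ *
        ∮ w in C(0, R), psiF lam y w * pF lam x w * w ^ (-(n : ℤ) - 1)) := by
  have hne : ∀ j, (lam j : ℂ) ≠ 0 := fun j => Complex.ofReal_ne_zero.mpr (hpos j).ne'
  have hR0 : 0 < R := ((hpos 0).trans_le (hub 0)).trans hR
  have h2pi : (2 * (Real.pi : ℂ) * Complex.I) ≠ 0 :=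
    mul_ne_zero (mul_ne_zero two_ne_zero (Complex.ofReal_ne_zero.mpr Real.pi_ne_zero))
      Complex.I_ne_zero
  intro n
  induction n with
  | zero =>
      intro x y
      rw [show (-((0:ℕ) : ℤ) - 1) = (-1 : ℤ) by norm_num]
      show ((phiF lam y x : ℝ) : ℂ) = _
      by_cases hyx : y < x
      · rw [base_int hpos hub hR hyx]
        unfold phiF; rw [if_pos hyx]; push_cast
        rw [inv_mul_cancel₀ h2pi, mul_one, one_div]
      · rw [vanish hpos hub hR (not_lt.mp hyx) (le_refl (-1 : ℤ))]
        unfold phiF; rw [if_neg hyx]; simp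
  | succ n ih =>
      intro x y
      rw [show (-(((n+1):ℕ) : ℤ) - 1) = -(n : ℤ) - 2 by push_cast; ring]
      show ((((∑ z ∈ Finset.range x, phiF lam y z * phik lam n z x) : ℝ)) : ℂ) = _
      rw [Complex.ofReal_sum]
      simp only [Complex.ofReal_mul]
      by_cases hyx : y < x
      · have hsub' : Finset.Ico (y+1) x ⊆ Finset.range x :=
          fun z hz => Finset.mem_range.mpr (Finset.mem_Ico.mp hz).2
        have hzero : ∀ z ∈ Finset.range x, z ∉ Finset.Ico (y+1) x →
            ((phiF lam y z : ℝ) : ℂ) * ((phik lam n z x : ℝ) : ℂ) = 0 := by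
          intro z hz hnz
          have hz1 := Finset.mem_range.mp hz
          have : ¬ y < z := by
            intro h
            exact hnz (Finset.mem_Ico.mpr ⟨by omega, hz1⟩)
          unfold phiF; rw [if_neg this]; simp
        rw [← Finset.sum_subset hsub' hzero]
        have hterm : ∀ z ∈ Finset.Ico (y+1) x,
            ((phiF lam y z : ℝ) : ℂ) * ((phik lam n z x : ℝ) : ℂ)
            = ((lam y : ℂ)⁻¹ * (2 * (Real.pi : ℂ) * Complex.I)⁻¹) *
              ((lam z : ℂ)⁻¹ *
                (∮ w in C(0, R), psiF lam z w * pF lam x w * w ^ (-(n : ℤ) - 1))) := by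
          intro z hz
          have hyz : y < z := by have := (Finset.mem_Ico.mp hz).1; omega
          rw [ih x z]
          unfold phiF; rw [if_pos hyz]; push_cast
          ring
        rw [Finset.sum_congr rfl hterm, ← Finset.mul_sum]
        have hS : (∑ z ∈ Finset.Ico (y+1) x, (lam z : ℂ)⁻¹ *
              (∮ w in C(0, R), psiF lam z w * pF lam x w * w ^ (-(n : ℤ) - 1)))
            = ∮ w in C(0, R), ∑ z ∈ Finset.Ico (y+1) x,
                (lam z : ℂ)⁻¹ * (psiF lam z w * pF lam x w * w ^ (-(n : ℤ) - 1)) := by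
          rw [circleIntegral_finset_sum _ _ (fun z _ =>
            (integrable_integrand hpos hub hR z x _).const_mul' _)]
          exact Finset.sum_congr rfl fun z _ =>
            (circleIntegral.integral_const_mul _ _ _ _).symm
        rw [hS]
        have hkey : ∀ w ∈ Metric.sphere (0:ℂ) R,
            (∑ z ∈ Finset.Ico (y+1) x,
              (lam z : ℂ)⁻¹ * (psiF lam z w * pF lam x w * w ^ (-(n : ℤ) - 1)))
            = w ^ (-(n : ℤ) - 2) - psiF lam y w * pF lam x w * w ^ (-(n : ℤ) - 2) := by
          intro w hw
          obtain ⟨hw0, hsubw⟩ := sphere_facts hpos hub hR hw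
          have ht := tele hpos hw0 hsubw y (x-1) (by omega)
          rw [show x - 1 + 1 = x by omega] at ht
          have hP1 : psiF lam (x-1) w * pF lam x w = 1 := by
            rw [reduce_lt hpos hsubw (show x-1 < x by omega), show x-1+1 = x by omega,
              Finset.Ico_self, Finset.prod_empty]
          have hrw : ∀ z, (lam z : ℂ)⁻¹ * (psiF lam z w * pF lam x w * w ^ (-(n : ℤ) - 1))
              = ((lam z : ℂ)⁻¹ * psiF lam z w) * (pF lam x w * w ^ (-(n : ℤ) - 1)) :=
            fun z => by ring
          rw [Finset.sum_congr rfl (fun z _ => hrw z), ← Finset.sum_mul, ht]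
          have hpow : w ^ (-(n : ℤ) - 2) = w ^ (-(n : ℤ) - 1) * w⁻¹ := by
            rw [show (-(n : ℤ) - 2) = (-(n : ℤ) - 1) - 1 by ring, zpow_sub_one₀ hw0]
          rw [hpow]
          set E := w ^ (-(n : ℤ) - 1) with hE
          linear_combination (E * w⁻¹) * hP1
        rw [circleIntegral.integral_congr hR0.le hkey,
          circleIntegral.integral_sub (integrable_zpow hpos hub hR _)
            (integrable_integrand hpos hub hR y x _)]
        have hz0int : (∮ w in C(0, R), w ^ (-(n : ℤ) - 2)) = 0 := by
          have h := circleIntegral.integral_sub_zpow_of_ne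
            (show (-(n : ℤ) - 2) ≠ -1 by omega) (0 : ℂ) (0 : ℂ) R
          simpa using h
        rw [hz0int]
        ring
      · have hxy : x ≤ y := not_lt.mp hyx
        rw [Finset.sum_eq_zero, vanish hpos hub hR hxy (show -(n : ℤ) - 2 ≤ -1 by omega)]
        · simp
        · intro z hz
          have : ¬ y < z := by have := Finset.mem_range.mp hz; omega
          unfold phiF; rw [if_neg this]; simp

end Aux

/-- for k ≥ 1,
φ^{(k)}(y,x) = −(1/λ(y)) (1/2πi) ∮_{C_λ} ψ_y(w) p_x(w) w^{−k} dw. -/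
theorem stmt_16 (lam : ℕ → ℝ) (s M : ℝ) (hs : 0 < s)
    (hlb : ∀ x, s ≤ lam x) (hub : ∀ x, lam x ≤ M)
    (R : ℝ) (hR : M < R) (k : ℕ) (hk : 1 ≤ k) (y x : ℕ) :
    ((phik lam (k - 1) y x : ℝ) : ℂ) =
      -(1 / (lam y : ℂ)) * ((2 * (Real.pi : ℂ) * Complex.I)⁻¹ *
        ∮ w in C(0, R), psiF lam y w * pF lam x w * w ^ (-(k : ℤ))) := by
  have hpos : ∀ j, 0 < lam j := fun j => hs.trans_le (hlb j)
  have h := main_int hpos hub hR (k - 1) x y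
  rw [show (-(((k-1) : ℕ) : ℤ) - 1) = -(k : ℤ) by omega] at h
  exact h
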